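/- Identifying ℍ × ℍ with an open subset of ℝ⁴ via coordinates (x₁,y₁,x₂,y₂), the vector field X(x₁,y₁,x₂,y₂) = -ln(λ)(λ^{-t} y₂ e₂ + λ^t y₁ e₄) at a point f_z(t,x,y) is orthogonal (in the Euclidean inner product on ℝ⁴) to the image of the differential of the orbit map f_z at (t,x,y). -/

import Mathlib

open Real

/-- The orbit map of the Sol action on ℍ×ℍ ⊂ ℝ⁴, in real coordinates
`(x₁, y₁, x₂, y₂)`, where `z_k = x_k + i y_k`. -/
noncomputable def orbitMapR4 (l a b c d x₁ y₁ x₂ y₂ : ℝ) (p : ℝ × ℝ × ℝ) :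
    EuclideanSpace ℝ (Fin 4) :=
  WithLp.toLp 2 ![l ^ p.1 * x₁ + (a * p.2.1 + b * p.2.2), l ^ p.1 * y₁,
    l ^ (-p.1) * x₂ + (c * p.2.1 + d * p.2.2), l ^ (-p.1) * y₂]

/-- The vector field `X = -ln(λ)(λ^{-t} y₂ e₂ + λ^t y₁ e₄)`. -/
noncomputable def normalField (l y₁ y₂ t : ℝ) : EuclideanSpace ℝ (Fin 4) :=
  WithLp.toLp 2 ![0, -Real.log l * (l ^ (-t) * y₂), 0, -Real.log l * (l ^ t * y₁)]

/-- The vector field `X(f_z(t,x,y)) = -ln(λ)(λ^{-t} y₂ e₂ + λ^t y₁ e₄)` is orthogonal,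
in the Euclidean inner product on ℝ⁴, to the image of the differential of the orbit
map `f_z` at `(t,x,y)`. -/
theorem normalField_orthogonal (l a b c d x₁ y₁ x₂ y₂ : ℝ) (hl : 1 < l)
    (hM : a * d - b * c ≠ 0) (hy₁ : 0 < y₁) (hy₂ : 0 < y₂) (p : ℝ × ℝ × ℝ) :
    ∀ v ∈ Set.range (fderiv ℝ (orbitMapR4 l a b c d x₁ y₁ x₂ y₂) p),
      inner ℝ (normalField l y₁ y₂ p.1) v = (0 : ℝ) := by
  have hl0 : (0 : ℝ) < l := lt_trans one_pos hl
  set w : EuclideanSpace ℝ (Fin 4) := normalField l y₁ y₂ p.1 with hw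
  set f : ℝ × ℝ × ℝ → EuclideanSpace ℝ (Fin 4) := orbitMapR4 l a b c d x₁ y₁ x₂ y₂ with hf
  -- basic derivative facts for `t ↦ l ^ t` and `t ↦ l ^ (-t)`
  have h1 : HasDerivAt (fun t : ℝ => l ^ t) (l ^ p.1 * Real.log l) p.1 :=
    (Real.hasStrictDerivAt_const_rpow hl0 p.1).hasDerivAt
  have h2 : HasDerivAt (fun t : ℝ => l ^ (-t)) (-(l ^ (-p.1) * Real.log l)) p.1 := by
    have := ((Real.hasStrictDerivAt_const_rpow hl0 (-p.1)).hasDerivAt).comp p.1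
      (hasDerivAt_neg p.1)
    exact this.congr_deriv (by ring)
  have hd1 : DifferentiableAt ℝ (fun q : ℝ × ℝ × ℝ => l ^ q.1) p :=
    (h1.comp_hasFDerivAt p hasFDerivAt_fst).differentiableAt
  have hd2 : DifferentiableAt ℝ (fun q : ℝ × ℝ × ℝ => l ^ (-q.1)) p :=
    (h2.comp_hasFDerivAt p hasFDerivAt_fst).differentiableAt
  -- differentiability of the orbit map
  have hdf : DifferentiableAt ℝ f p := by
    have hF : DifferentiableAt ℝ
        (fun q : ℝ × ℝ × ℝ =>
          (![l ^ q.1 * x₁ + (a * q.2.1 + b * q.2.2), l ^ q.1 * y₁,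
            l ^ (-q.1) * x₂ + (c * q.2.1 + d * q.2.2), l ^ (-q.1) * y₂] : Fin 4 → ℝ)) p := by
      rw [differentiableAt_pi]
      intro i
      fin_cases i <;> simp only [Matrix.cons_val_zero, Matrix.cons_val_one, Matrix.head_cons,
        Matrix.cons_val_two, Matrix.tail_cons, Matrix.cons_val_three, Fin.isValue]
      · exact (hd1.mul_const x₁).add
          (((differentiableAt_snd.fst).const_mul a).add ((differentiableAt_snd.snd).const_mul b))
      · exact hd1.mul_const y₁
      · exact (hd2.mul_const x₂).add
          (((differentiableAt_snd.fst).const_mul c).add ((differentiableAt_snd.snd).const_mul d))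
      · exact hd2.mul_const y₂
    exact ((EuclideanSpace.equiv (Fin 4) ℝ).symm : (Fin 4 → ℝ) →L[ℝ]
      EuclideanSpace ℝ (Fin 4)).differentiableAt.comp p hF
  -- the composition `q ↦ ⟪w, f q⟫` has derivative `(innerSL ℝ w).comp (fderiv ℝ f p)`
  have hcomp : HasFDerivAt (fun q => (innerSL ℝ w) (f q))
      ((innerSL ℝ w).comp (fderiv ℝ f p)) p :=
    (innerSL ℝ w).hasFDerivAt.comp p hdf.hasFDerivAt
  -- but it also has derivative 0
  have hzero : HasFDerivAt (fun q => (innerSL ℝ w) (f q)) (0 : ℝ × ℝ × ℝ →L[ℝ] ℝ) p := by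
    have hgeq : (fun q : ℝ × ℝ × ℝ => (innerSL ℝ w) (f q)) =
        fun q : ℝ × ℝ × ℝ =>
          (-Real.log l * (l ^ (-p.1) * y₂)) * (l ^ q.1 * y₁) +
          (-Real.log l * (l ^ p.1 * y₁)) * (l ^ (-q.1) * y₂) := by
      funext q
      simp [hw, hf, normalField, orbitMapR4, PiLp.inner_apply, Fin.sum_univ_four,
        RCLike.inner_apply, conj_trivial]
      ring
    rw [hgeq]
    have h3 : HasDerivAt (fun t : ℝ =>
        (-Real.log l * (l ^ (-p.1) * y₂)) * (l ^ t * y₁) +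
        (-Real.log l * (l ^ p.1 * y₁)) * (l ^ (-t) * y₂)) 0 p.1 := by
      have := ((h1.mul_const y₁).const_mul (-Real.log l * (l ^ (-p.1) * y₂))).add
        ((h2.mul_const y₂).const_mul (-Real.log l * (l ^ p.1 * y₁)))
      exact this.congr_deriv (by ring)
    have h4 := h3.comp_hasFDerivAt p (hasFDerivAt_fst (𝕜 := ℝ) (p := p))
    simpa [Function.comp_def] using h4
  have hkey : (innerSL ℝ w).comp (fderiv ℝ f p) = 0 := hcomp.unique hzero
  rintro v ⟨q, rfl⟩
  have : ((innerSL ℝ w).comp (fderiv ℝ f p)) q = 0 := by rw [hkey]; rfl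
  simpa using this
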